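/- Let L be a language over a finite alphabet not containing the empty word, and for each n let C_n = Z/nZ act on L^{\times n} by cyclic permutation of components. Then the strict growth series of the disjoint union of quotients \bigcup_{n \ge 1} L^{\times n}/C_n (with length of an orbit the common length of its tuples) equals \sum_{k=1}^\infty \sum_{l=1}^\infty \frac{\phi(k)}{kl} (F_L(z^k))^l, where \phi is the Euler totient function. -/

import Mathlib

/-- The `n`-tuples of words of `L` of total length `m`. -/
def LTuples {X : Type*} (L : Set (List X)) (n m : ℕ) : Type _ :=
  {v : Fin n → List X // (∀ i, v i ∈ L) ∧ (∑ i, (v i).length) = m}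

/-- Cyclic rotation relation on `n`-tuples: `w` is a cyclic permutation of `v`. -/
def rotRel {X : Type*} (L : Set (List X)) (n m : ℕ) :
    LTuples L n m → LTuples L n m → Prop :=
  fun v w => ∃ j : Fin n, ∀ i : Fin n, w.1 i = v.1 (i + j)

/-- The number of `C_n`-orbits (necklaces) of `n`-tuples of words of `L`
of total length `m`. -/
noncomputable def neckCount {X : Type*} (L : Set (List X)) (n m : ℕ) : ℕ :=
  Nat.card (Quot (rotRel L n m))

/-- The strict growth series of `L(z^k)`, i.e. of `F_L` with `z^k` substituted. -/
noncomputable def growthSeriesPow {X : Type*} [Fintype X] (L : Set (List X)) (k : ℕ) :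
    PowerSeries ℕ :=
  PowerSeries.mk fun j => if k ∣ j then Set.ncard {w ∈ L | w.length = j / k} else 0

namespace NeckAux

open Finset

variable {X : Type*}

/-- Words of `L` with weighted length `q`. -/
def Wrd (L : Set (List X)) (k q : ℕ) : Type _ :=
  {w : List X // w ∈ L ∧ k * w.length = q}

/-- Weighted tuples. -/
def WTup (L : Set (List X)) (k l m : ℕ) : Type _ :=
  {v : Fin l → List X // (∀ i, v i ∈ L) ∧ ∑ i, k * (v i).length = m}

section Fin
variable [Finite X] {L : Set (List X)}

lemma finite_pi_le (l m : ℕ) : Finite (Fin l → {xs : List X // xs.length ≤ m}) := by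
  haveI : Finite {xs : List X // xs.length ≤ m} := (List.finite_length_le X m).to_subtype
  infer_instance

lemma finite_WTup {k : ℕ} (hk : 0 < k) (l m : ℕ) : Finite (WTup L k l m) := by
  haveI := finite_pi_le (X := X) l m
  refine Finite.of_injective (fun v => fun i : Fin l =>
    (⟨v.1 i, ?_⟩ : {xs : List X // xs.length ≤ m})) ?_
  · calc (v.1 i).length ≤ k * (v.1 i).length := Nat.le_mul_of_pos_left _ hk
      _ ≤ ∑ j, k * (v.1 j).length :=
        Finset.single_le_sum (f := fun j => k * (v.1 j).length) (fun j _ => Nat.zero_le _) (Finset.mem_univ i)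
      _ = m := v.2.2
  · intro v w h
    apply Subtype.ext; funext i
    exact congrArg Subtype.val (congrFun h i)

instance finite_LTuples (l m : ℕ) : Finite (LTuples L l m) := by
  haveI := finite_pi_le (X := X) l m
  refine Finite.of_injective (fun v => fun i : Fin l =>
    (⟨v.1 i, ?_⟩ : {xs : List X // xs.length ≤ m})) ?_
  · calc (v.1 i).length ≤ ∑ j, (v.1 j).length :=
        Finset.single_le_sum (f := fun j => (v.1 j).length) (fun j _ => Nat.zero_le _) (Finset.mem_univ i)
      _ = m := v.2.2
  · intro v w h
    apply Subtype.ext; funext i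
    exact congrArg Subtype.val (congrFun h i)

lemma finite_Wrd {k : ℕ} (hk : 0 < k) (q : ℕ) : Finite (Wrd L k q) := by
  haveI : Finite {xs : List X // xs.length ≤ q} := (List.finite_length_le X q).to_subtype
  refine Finite.of_injective (fun w => (⟨w.1, ?_⟩ : {xs : List X // xs.length ≤ q})) ?_
  · calc w.1.length ≤ k * w.1.length := Nat.le_mul_of_pos_left _ hk
      _ = q := w.2.2
  · intro v w h
    apply Subtype.ext
    have := congrArg Subtype.val h
    simpa using this


end Fin

section Empty
variable {L : Set (List X)} (hL : [] ∉ L)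
include hL

lemma isEmpty_LTuples {l m : ℕ} (h : m < l) : IsEmpty (LTuples L l m) := by
  constructor
  rintro ⟨v, hv, hs⟩
  have : ∀ i, 1 ≤ (v i).length := fun i => by
    rcases Nat.eq_zero_or_pos (v i).length with h0 | h1
    · exact absurd (hv i) (by simpa [List.length_eq_zero_iff.mp h0] using hL)
    · exact h1
  have : (l : ℕ) ≤ m := by
    calc (l : ℕ) = ∑ _i : Fin l, 1 := by simp
      _ ≤ ∑ i, (v i).length := Finset.sum_le_sum fun i _ => this i
      _ = m := hs
  omega

lemma isEmpty_WTup {k l m : ℕ} (h : m < l * k) : IsEmpty (WTup L k l m) := by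
  constructor
  rintro ⟨v, hv, hs⟩
  have h1 : ∀ i, 1 ≤ (v i).length := fun i => by
    rcases Nat.eq_zero_or_pos (v i).length with h0 | h1
    · exact absurd (hv i) (by simpa [List.length_eq_zero_iff.mp h0] using hL)
    · exact h1
  have : l * k ≤ m := by
    calc l * k = ∑ _i : Fin l, k := by simp [mul_comm]
      _ ≤ ∑ i, k * (v i).length := Finset.sum_le_sum fun i _ =>
          Nat.le_mul_of_pos_right _ (h1 i)
      _ = m := hs
  omega

end Empty

lemma sum_mod_aux {M : Type*} [AddCommMonoid M] (d e : ℕ) (f : ℕ → M) :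
    ∑ i ∈ range (d * e), f (i % d) = e • ∑ i ∈ range d, f (i % d) := by
  induction e with
  | zero => simp
  | succ e ih =>
    rw [Nat.mul_succ, Finset.sum_range_add, ih, succ_nsmul]
    congr 1
    refine Finset.sum_congr rfl fun i _ => ?_
    rw [add_comm (d * e) i, Nat.add_mul_mod_self_left]


section Shift

open Fin.NatCast

variable {α : Type*} {n : ℕ}

/-- `v` is invariant under shifting indices by `t`. -/
def ShiftP (v : Fin (n + 1) → α) (t : ℕ) : Prop :=
  ∀ i : Fin (n + 1), v (i + (t : Fin (n + 1))) = v i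

lemma shiftP_add {v : Fin (n + 1) → α} {a b : ℕ} (ha : ShiftP v a) (hb : ShiftP v b) :
    ShiftP v (a + b) := by
  intro i
  rw [Nat.cast_add, ← add_assoc, hb (i + a), ha i]

lemma shiftP_zero (v : Fin (n + 1) → α) : ShiftP v 0 := fun i => by simp

lemma shiftP_self (v : Fin (n + 1) → α) : ShiftP v (n + 1) := fun i => by
  rw [Fin.natCast_self]; simp

lemma shiftP_mul {v : Fin (n + 1) → α} {a : ℕ} (c : ℕ) (ha : ShiftP v a) :
    ShiftP v (a * c) := by
  induction c with
  | zero => simpa using shiftP_zero v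
  | succ c ih => rw [Nat.mul_succ]; exact shiftP_add ih ha

lemma shiftP_mod {v : Fin (n + 1) → α} {a b : ℕ} (ha : ShiftP v a) (hb : ShiftP v b) :
    ShiftP v (b % a) := by
  intro i
  have h1 : ShiftP v (a * (b / a)) := shiftP_mul (b / a) ha
  have h2 : v (i + ((b % a : ℕ) : Fin (n + 1)) + ((a * (b / a) : ℕ) : Fin (n + 1)))
      = v (i + ((b % a : ℕ) : Fin (n + 1))) := h1 _
  rw [add_assoc, ← Nat.cast_add, Nat.mod_add_div b a] at h2
  rw [← h2, hb i]

lemma shiftP_gcd {v : Fin (n + 1) → α} {a b : ℕ} (ha : ShiftP v a) (hb : ShiftP v b) :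
    ShiftP v (Nat.gcd a b) := by
  have H : ∀ a b : ℕ, ShiftP v a → ShiftP v b → ShiftP v (Nat.gcd a b) := by
    intro a b
    induction a, b using Nat.gcd.induction with
    | H0 b => intro _ hb'; simpa using hb'
    | H1 a b h ih =>
      intro ha' hb'
      rw [Nat.gcd_rec]
      exact ih (shiftP_mod ha' hb') ha'
  exact H a b ha hb

lemma mod_lt_np1 {d : ℕ} (hd : 0 < d) (hdN : d ∣ n + 1) (t : ℕ) : t % d < n + 1 :=
  lt_of_lt_of_le (Nat.mod_lt _ hd) (Nat.le_of_dvd (Nat.succ_pos n) hdN)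

/-- Invariance under rotation by `j` is equivalent to being constant on residues
modulo `d = gcd j (n+1)`. -/
lemma shift_iff_mod (v : Fin (n + 1) → α) (j : Fin (n + 1)) :
    (∀ i, v (i + j) = v i) ↔
      ∀ i : Fin (n + 1), v i = v ⟨i.val % Nat.gcd j.val (n + 1),
        mod_lt_np1 (Nat.gcd_pos_of_pos_right _ (Nat.succ_pos n)) (Nat.gcd_dvd_right _ _) _⟩ := by
  set d := Nat.gcd j.val (n + 1) with hdd
  have hd : 0 < d := Nat.gcd_pos_of_pos_right _ (Nat.succ_pos n)
  have hdN : d ∣ n + 1 := Nat.gcd_dvd_right _ _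
  have hdj : d ∣ j.val := Nat.gcd_dvd_left _ _
  constructor
  · intro h i
    have hj : ShiftP v j.val := by
      intro i'; rw [Fin.cast_val_eq_self]; exact h i'
    have hgcd : ShiftP v d := shiftP_gcd hj (shiftP_self v)
    have h2 : ShiftP v (d * (i.val / d)) := shiftP_mul (i.val / d) hgcd
    have key : (⟨i.val % d, mod_lt_np1 hd hdN _⟩ : Fin (n + 1))
        + ((d * (i.val / d) : ℕ) : Fin (n + 1)) = i := by
      have : (⟨i.val % d, mod_lt_np1 hd hdN _⟩ : Fin (n + 1))
          = ((i.val % d : ℕ) : Fin (n + 1)) := by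
        apply Fin.ext
        simp [Fin.val_cast_of_lt (mod_lt_np1 hd hdN i.val)]
      rw [this, ← Nat.cast_add, Nat.mod_add_div i.val d, Fin.cast_val_eq_self]
    calc v i = v (⟨i.val % d, mod_lt_np1 hd hdN _⟩ + ((d * (i.val / d) : ℕ) : Fin (n + 1))) := by
          rw [key]
      _ = v ⟨i.val % d, mod_lt_np1 hd hdN _⟩ := h2 _
  · intro h i
    have hval : (i + j).val = (i.val + j.val) % (n + 1) := by
      rw [Fin.add_def]
    have hj0 : j.val % d = 0 := Nat.mod_eq_zero_of_dvd hdj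
    have hmod : (i + j).val % d = i.val % d := by
      rw [hval, Nat.mod_mod_of_dvd _ hdN, Nat.add_mod, hj0]
      simp [Nat.mod_mod_of_dvd]
    rw [h (i + j), h i]
    congr 1
    exact Fin.ext hmod

end Shift


section PeriodicEquiv

variable {L : Set (List X)} {n d e m : ℕ}

lemma sum_mod_fin (hd : 0 < d) (he : n + 1 = d * e) (f : ℕ → ℕ) :
    ∑ i : Fin (n + 1), f (i.val % d) = e * ∑ i : Fin d, f i.val := by
  rw [Fin.sum_univ_eq_sum_range (fun t => f (t % d)) (n + 1), he, sum_mod_aux, smul_eq_mul]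
  congr 1
  rw [← Fin.sum_univ_eq_sum_range (fun t => f (t % d)) d]
  exact Finset.sum_congr rfl fun i _ => by rw [Nat.mod_eq_of_lt i.isLt]

/-- Periodic tuples with period `d` correspond to `d`-tuples. -/
def perEquiv (hd : 0 < d) (he : n + 1 = d * e) (m : ℕ) :
    {v : Fin (n + 1) → List X // (∀ i, v i ∈ L) ∧ (∑ i, (v i).length) = m ∧
        ∀ i : Fin (n + 1), v i = v ⟨i.val % d, mod_lt_np1 hd ⟨e, he⟩ i.val⟩}
    ≃ {u : Fin d → List X // (∀ i, u i ∈ L) ∧ e * (∑ i, (u i).length) = m} where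
  toFun v := by
    refine ⟨fun i => v.1 ⟨i.val, lt_of_lt_of_le i.isLt (Nat.le_of_dvd (Nat.succ_pos n) ⟨e, he⟩)⟩,
      fun i => v.2.1 _, ?_⟩
    have hper := v.2.2.2
    have key := sum_mod_fin (n := n) hd he
      (fun t => (v.1 ⟨t % d, mod_lt_np1 hd ⟨e, he⟩ t⟩).length)
    have step : (m : ℕ) = e * ∑ i : Fin d,
        ((fun i : Fin d => v.1 ⟨i.val,
          lt_of_lt_of_le i.isLt (Nat.le_of_dvd (Nat.succ_pos n) ⟨e, he⟩)⟩) i).length := by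
      calc m = ∑ i : Fin (n + 1), (v.1 i).length := v.2.2.1.symm
        _ = ∑ i : Fin (n + 1), (v.1 ⟨i.val % d % d, mod_lt_np1 hd ⟨e, he⟩ _⟩).length := by
            refine Finset.sum_congr rfl fun i _ => ?_
            rw [hper i]
            exact congrArg (fun x => (v.1 x).length)
              (Fin.ext (Nat.mod_mod_of_dvd _ dvd_rfl)).symm
        _ = e * ∑ i : Fin d, (v.1 ⟨i.val % d, mod_lt_np1 hd ⟨e, he⟩ _⟩).length := key
        _ = _ := by
            congr 1
            refine Finset.sum_congr rfl fun i _ => ?_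
            exact congrArg (fun x => (v.1 x).length) (Fin.ext (Nat.mod_eq_of_lt i.isLt))
    exact step.symm
  invFun u := by
    refine ⟨fun i => u.1 ⟨i.val % d, Nat.mod_lt _ hd⟩, fun i => u.2.1 _, ?_, fun i => ?_⟩
    · have key := sum_mod_fin (n := n) hd he
        (fun t => (u.1 ⟨t % d, Nat.mod_lt _ hd⟩).length)
      calc ∑ i : Fin (n + 1), (u.1 ⟨i.val % d, Nat.mod_lt _ hd⟩).length
          = ∑ i : Fin (n + 1), (u.1 ⟨i.val % d % d, Nat.mod_lt _ hd⟩).length := by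
            refine Finset.sum_congr rfl fun i _ => ?_
            exact congrArg (fun x => (u.1 x).length)
              (Fin.ext (Nat.mod_mod_of_dvd _ dvd_rfl)).symm
        _ = e * ∑ i : Fin d, (u.1 ⟨i.val % d, Nat.mod_lt _ hd⟩).length := key
        _ = e * ∑ i : Fin d, (u.1 i).length := by
            congr 1
            refine Finset.sum_congr rfl fun i _ => ?_
            exact congrArg (fun x => (u.1 x).length) (Fin.ext (Nat.mod_eq_of_lt i.isLt))
        _ = m := u.2.2
    · exact congrArg (fun x => u.1 x) (Fin.ext (Nat.mod_mod_of_dvd _ dvd_rfl)).symm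
  left_inv v := by
    apply Subtype.ext
    funext i
    exact (v.2.2.2 i).symm
  right_inv u := by
    apply Subtype.ext
    funext i
    exact congrArg (fun x => u.1 x) (Fin.ext (Nat.mod_eq_of_lt i.isLt))

lemma card_periodic (hd : 0 < d) (he : n + 1 = d * e) (m : ℕ) :
    Nat.card {v : Fin (n + 1) → List X // (∀ i, v i ∈ L) ∧ (∑ i, (v i).length) = m ∧
        ∀ i : Fin (n + 1), v i = v ⟨i.val % d, mod_lt_np1 hd ⟨e, he⟩ i.val⟩}
      = if e ∣ m then Nat.card (LTuples L d (m / e)) else 0 := by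
  rw [Nat.card_congr (perEquiv hd he m)]
  have he' : 0 < e := Nat.pos_of_ne_zero fun h0 => by simp [h0] at he
  by_cases hem : e ∣ m
  · rw [if_pos hem]
    refine Nat.card_congr (Equiv.subtypeEquivRight fun u => ?_)
    constructor
    · rintro ⟨h1, h2⟩
      exact ⟨h1, by rw [← h2, Nat.mul_div_cancel_left _ he']⟩
    · rintro ⟨h1, h2⟩
      exact ⟨h1, by rw [h2, Nat.mul_div_cancel' hem]⟩
  · rw [if_neg hem]
    have : IsEmpty {u : Fin d → List X // (∀ i, u i ∈ L) ∧ e * (∑ i, (u i).length) = m} :=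
      ⟨fun u => hem ⟨_, u.2.2.symm⟩⟩
    exact Nat.card_of_isEmpty

end PeriodicEquiv


section Burnside

variable {L : Set (List X)}

instance rotAction (L : Set (List X)) (n m : ℕ) :
    AddAction (Fin (n + 1)) (LTuples L (n + 1) m) where
  vadd j v := ⟨fun i => v.1 (i + j), fun i => v.2.1 _,
    (Fintype.sum_equiv (Equiv.addRight j) _ _ fun i => rfl).trans v.2.2⟩
  zero_vadd v := by
    apply Subtype.ext; funext i
    show v.1 (i + 0) = v.1 i
    rw [add_zero]
  add_vadd a b v := by
    apply Subtype.ext; funext i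
    show v.1 (i + (a + b)) = v.1 (i + a + b)
    rw [add_assoc]

lemma quot_rotRel_card (L : Set (List X)) (n m : ℕ) :
    Nat.card (Quot (rotRel L (n + 1) m)) =
      Nat.card (Quotient (AddAction.orbitRel (Fin (n + 1)) (LTuples L (n + 1) m))) := by
  apply Nat.card_congr
  apply Quot.congrRight
  intro v w
  constructor
  · rintro ⟨j, hj⟩
    have hjv : j +ᵥ v = w := Subtype.ext (funext fun i => (hj i).symm)
    have hmem : v ∈ AddAction.orbit (Fin (n + 1)) w :=
      AddAction.mem_orbit_iff.mpr ⟨-j, by rw [← hjv, ← add_vadd, neg_add_cancel, zero_vadd]⟩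
    exact hmem
  · intro h
    have hmem : v ∈ AddAction.orbit (Fin (n + 1)) w := h
    obtain ⟨g, hg⟩ := AddAction.mem_orbit_iff.mp hmem
    refine ⟨-g, fun i => ?_⟩
    rw [← hg]
    show w.1 i = w.1 (i + -g + g)
    rw [add_assoc, neg_add_cancel, add_zero]

variable [Finite X]

lemma neck_mul (n m : ℕ) :
    neckCount L (n + 1) m * (n + 1)
      = ∑ j : Fin (n + 1), Nat.card (AddAction.fixedBy (LTuples L (n + 1) m) j) := by
  classical
  letI : Fintype (LTuples L (n + 1) m) := Fintype.ofFinite _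
  letI : ∀ j : Fin (n + 1), Fintype (AddAction.fixedBy (LTuples L (n + 1) m) j) :=
    fun j => Fintype.ofFinite _
  letI : Fintype (Quotient (AddAction.orbitRel (Fin (n + 1)) (LTuples L (n + 1) m))) :=
    Fintype.ofFinite _
  have hb := AddAction.sum_card_fixedBy_eq_card_orbits_mul_card_addGroup
    (Fin (n + 1)) (LTuples L (n + 1) m)
  rw [Fintype.card_fin] at hb
  rw [neckCount, quot_rotRel_card, Nat.card_eq_fintype_card, ← hb]
  exact Finset.sum_congr rfl fun j _ => Nat.card_eq_fintype_card.symm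

lemma card_fixedBy (n m : ℕ) (j : Fin (n + 1)) :
    Nat.card (AddAction.fixedBy (LTuples L (n + 1) m) j)
      = if ((n + 1) / Nat.gcd j.val (n + 1)) ∣ m
        then Nat.card (LTuples L (Nat.gcd j.val (n + 1))
          (m / ((n + 1) / Nat.gcd j.val (n + 1))))
        else 0 := by
  set d := Nat.gcd j.val (n + 1) with hd_def
  have hd : 0 < d := Nat.gcd_pos_of_pos_right _ (Nat.succ_pos n)
  have hdN : d ∣ n + 1 := Nat.gcd_dvd_right _ _
  have he : n + 1 = d * ((n + 1) / d) := (Nat.mul_div_cancel' hdN).symm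
  have e0 : (AddAction.fixedBy (LTuples L (n + 1) m) j) ≃
      {v : Fin (n + 1) → List X // (∀ i, v i ∈ L) ∧ (∑ i, (v i).length) = m ∧
        ∀ i, v (i + j) = v i} :=
    { toFun := fun vh =>
        ⟨vh.1.1, vh.1.2.1, vh.1.2.2, fun i => congrFun (congrArg Subtype.val vh.2) i⟩
      invFun := fun vf => ⟨⟨vf.1, vf.2.1, vf.2.2.1⟩, Subtype.ext (funext fun i => vf.2.2.2 i)⟩
      left_inv := fun _ => rfl
      right_inv := fun _ => rfl }
  have e1 := e0.trans (Equiv.subtypeEquivRight fun v =>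
    and_congr_right fun _ => and_congr_right fun _ => shift_iff_mod v j)
  rw [Nat.card_congr e1, card_periodic hd he m]

lemma neck_formula (n m : ℕ) :
    neckCount L (n + 1) m * (n + 1)
      = ∑ p ∈ (n + 1).divisorsAntidiagonal,
          Nat.totient p.1 * (if p.1 ∣ m then Nat.card (LTuples L p.2 (m / p.1)) else 0) := by
  classical
  rw [neck_mul]
  set G : ℕ → ℕ := fun d => if ((n + 1) / d) ∣ m
    then Nat.card (LTuples L d (m / ((n + 1) / d))) else 0 with hG
  have hmap : ∀ x ∈ Finset.range (n + 1), (n + 1).gcd x ∈ (n + 1).divisors :=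
    fun x _ => Nat.mem_divisors.mpr ⟨Nat.gcd_dvd_left _ _, Nat.succ_ne_zero n⟩
  calc ∑ j : Fin (n + 1), Nat.card (AddAction.fixedBy (LTuples L (n + 1) m) j)
      = ∑ j : Fin (n + 1), G (Nat.gcd (j.val) (n + 1)) :=
        Finset.sum_congr rfl fun j _ => card_fixedBy n m j
    _ = ∑ x ∈ Finset.range (n + 1), G (Nat.gcd x (n + 1)) :=
        Fin.sum_univ_eq_sum_range (fun x => G (Nat.gcd x (n + 1))) (n + 1)
    _ = ∑ x ∈ Finset.range (n + 1), G ((n + 1).gcd x) :=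
        Finset.sum_congr rfl fun x _ => by rw [Nat.gcd_comm]
    _ = ∑ d ∈ (n + 1).divisors, ∑ x ∈ Finset.range (n + 1) with (n + 1).gcd x = d,
          G ((n + 1).gcd x) :=
        (Finset.sum_fiberwise_of_maps_to hmap (fun x => G ((n + 1).gcd x))).symm
    _ = ∑ d ∈ (n + 1).divisors, Nat.totient ((n + 1) / d) * G d := by
        refine Finset.sum_congr rfl fun d hd => ?_
        have h1 : ∑ x ∈ Finset.range (n + 1) with (n + 1).gcd x = d, G ((n + 1).gcd x)
            = ∑ x ∈ Finset.range (n + 1) with (n + 1).gcd x = d, G d :=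
          Finset.sum_congr rfl fun x hx => by rw [(Finset.mem_filter.mp hx).2]
        rw [h1, Finset.sum_const, smul_eq_mul]
        congr 1
        exact (Nat.totient_div_of_dvd (Nat.mem_divisors.mp hd).1).symm
    _ = ∑ p ∈ (n + 1).divisorsAntidiagonal, Nat.totient p.1 * G p.2 :=
        (Nat.sum_divisorsAntidiagonal' (fun k l => Nat.totient k * G l)).symm
    _ = ∑ p ∈ (n + 1).divisorsAntidiagonal,
          Nat.totient p.1 * (if p.1 ∣ m then Nat.card (LTuples L p.2 (m / p.1)) else 0) := by
        refine Finset.sum_congr rfl fun p hp => ?_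
        obtain ⟨hmul, -⟩ := Nat.mem_divisorsAntidiagonal.mp hp
        have hp2 : 0 < p.2 := Nat.pos_of_ne_zero fun h0 => by
          rw [h0, mul_zero] at hmul
          exact Nat.succ_ne_zero n hmul.symm
        have hdiv : (n + 1) / p.2 = p.1 := by
          rw [← hmul]
          exact Nat.mul_div_cancel _ hp2
        simp only [hG, hdiv]

end Burnside


section Coeff

variable [Fintype X] {L : Set (List X)} {k : ℕ}

lemma coeff_g (hk : 0 < k) (q : ℕ) :
    PowerSeries.coeff q (growthSeriesPow L k) = Nat.card (Wrd L k q) := by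
  rw [growthSeriesPow, PowerSeries.coeff_mk]
  by_cases hq : k ∣ q
  · rw [if_pos hq, ← Nat.card_coe_set_eq]
    apply Nat.card_congr
    exact (Equiv.subtypeEquivRight fun w => by
      constructor
      · rintro ⟨h1, h2⟩
        exact ⟨h1, by rw [← h2, Nat.mul_div_cancel_left _ hk]⟩
      · rintro ⟨h1, h2⟩
        exact ⟨h1, by rw [h2, Nat.mul_div_cancel' hq]⟩).symm
  · rw [if_neg hq]
    haveI : IsEmpty (Wrd L k q) := ⟨fun w => hq ⟨w.1.length, w.2.2.symm⟩⟩
    exact (Nat.card_of_isEmpty).symm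

lemma card_step (hk : 0 < k) (l m : ℕ) :
    Nat.card (WTup L k (l + 1) m)
      = ∑ p ∈ Finset.HasAntidiagonal.antidiagonal m, Nat.card (WTup L k l p.1) * Nat.card (Wrd L k p.2) := by
  classical
  haveI := finite_WTup (L := L) hk (l + 1) m
  haveI : ∀ s : ℕ, Finite (WTup L k l s) := fun s => finite_WTup hk l s
  haveI : ∀ s : ℕ, Finite (Wrd L k s) := fun s => finite_Wrd hk s
  letI : Fintype (WTup L k (l + 1) m) := Fintype.ofFinite _
  letI : ∀ s : ℕ, Fintype (WTup L k l s) := fun s => Fintype.ofFinite _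
  letI : ∀ s : ℕ, Fintype (Wrd L k s) := fun s => Fintype.ofFinite _
  set Φ : WTup L k (l + 1) m → ℕ × ℕ := fun v =>
    (∑ i : Fin l, k * (v.1 i.castSucc).length, k * (v.1 (Fin.last l)).length) with hΦdef
  have hΦ : ∀ v, Φ v ∈ Finset.HasAntidiagonal.antidiagonal m := by
    intro v
    rw [Finset.HasAntidiagonal.mem_antidiagonal]
    rw [← v.2.2, Fin.sum_univ_castSucc]
  have key : ∀ p ∈ Finset.HasAntidiagonal.antidiagonal m,
      {v : WTup L k (l + 1) m // Φ v = p} ≃ WTup L k l p.1 × Wrd L k p.2 := by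
    intro p hp
    have hpm : p.1 + p.2 = m := Finset.HasAntidiagonal.mem_antidiagonal.mp hp
    exact {
      toFun := fun vh =>
        (⟨fun i => vh.1.1 i.castSucc, fun i => vh.1.2.1 _, congrArg Prod.fst vh.2⟩,
         ⟨vh.1.1 (Fin.last l), vh.1.2.1 _, congrArg Prod.snd vh.2⟩)
      invFun := fun uw => ⟨⟨Fin.snoc uw.1.1 uw.2.1, fun i => by
          refine Fin.lastCases ?_ (fun i' => ?_) i
          · rw [Fin.snoc_last]; exact uw.2.2.1
          · rw [Fin.snoc_castSucc]; exact uw.1.2.1 i', by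
          rw [Fin.sum_univ_castSucc]
          simp only [Fin.snoc_castSucc, Fin.snoc_last]
          rw [uw.1.2.2, uw.2.2.2, hpm]⟩, by
          apply Prod.ext
          · simp only [hΦdef]
            simp only [Fin.snoc_castSucc]
            exact uw.1.2.2
          · simp only [hΦdef]
            simp only [Fin.snoc_last]
            exact uw.2.2.2⟩
      left_inv := fun vh => by
        apply Subtype.ext
        apply Subtype.ext
        funext i
        refine Fin.lastCases ?_ (fun i' => ?_) i
        · simp only [Fin.snoc_last]
        · simp only [Fin.snoc_castSucc]
      right_inv := fun uw => by
        apply Prod.ext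
        · apply Subtype.ext
          funext i
          simp only [Fin.snoc_castSucc]
        · apply Subtype.ext
          simp only [Fin.snoc_last] }
  rw [Nat.card_eq_fintype_card]
  rw [← Finset.card_univ, Finset.card_eq_sum_card_fiberwise (f := Φ)
    (fun v _ => hΦ v)]
  refine Finset.sum_congr rfl fun p hp => ?_
  rw [show (Finset.univ.filter fun v => Φ v = p).card = Fintype.card {v // Φ v = p} from
    (Fintype.card_subtype _).symm]
  rw [Fintype.card_congr (key p hp), Fintype.card_prod]
  rw [Nat.card_eq_fintype_card, Nat.card_eq_fintype_card]

lemma card_pow (hk : 0 < k) (l : ℕ) : ∀ m : ℕ,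
    PowerSeries.coeff m ((growthSeriesPow L k) ^ l) = Nat.card (WTup L k l m) := by
  induction l with
  | zero =>
    intro m
    rw [pow_zero, PowerSeries.coeff_one]
    by_cases hm : m = 0
    · subst hm
      rw [if_pos rfl]
      haveI : Unique (WTup L k 0 0) :=
        { default := ⟨fun i => i.elim0, fun i => i.elim0, by simp⟩
          uniq := fun v => Subtype.ext (funext fun i => i.elim0) }
      exact (Nat.card_unique).symm
    · rw [if_neg hm]
      haveI : IsEmpty (WTup L k 0 m) := ⟨fun v => hm (by rw [← v.2.2]; simp)⟩
      exact (Nat.card_of_isEmpty).symm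
  | succ l ih =>
    intro m
    rw [pow_succ, PowerSeries.coeff_mul, card_step hk l m]
    refine Finset.sum_congr rfl fun p _ => ?_
    rw [ih p.1, coeff_g hk p.2]

lemma coeff_eq (hk : 0 < k) (l m : ℕ) :
    PowerSeries.coeff m ((growthSeriesPow L k) ^ l)
      = if k ∣ m then Nat.card (LTuples L l (m / k)) else 0 := by
  rw [card_pow hk l m]
  by_cases hm : k ∣ m
  · rw [if_pos hm]
    apply Nat.card_congr
    refine Equiv.subtypeEquivRight fun v => and_congr_right fun _ => ?_
    rw [← Finset.mul_sum]
    constructor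
    · intro h
      rw [← h, Nat.mul_div_cancel_left _ hk]
    · intro h
      rw [h, Nat.mul_div_cancel' hm]
  · rw [if_neg hm]
    haveI : IsEmpty (WTup L k l m) :=
      ⟨fun v => hm ⟨∑ i, (v.1 i).length, by rw [Finset.mul_sum]; exact v.2.2.symm⟩⟩
    exact Nat.card_of_isEmpty

end Coeff


section Assemble

variable [Fintype X] {L : Set (List X)}

lemma neck_zero (hL : [] ∉ L) {n m : ℕ} (h : m < n + 1) : neckCount L (n + 1) m = 0 := by
  haveI := isEmpty_LTuples (L := L) hL h
  haveI : IsEmpty (Quot (rotRel L (n + 1) m)) := by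
    constructor
    intro q
    induction q using Quot.ind with
    | _ a => exact (IsEmpty.false a).elim
  exact Nat.card_of_isEmpty

lemma neck_real (n m : ℕ) :
    (neckCount L (n + 1) m : ℝ)
      = ∑ p ∈ (n + 1).divisorsAntidiagonal,
          (Nat.totient p.1 : ℝ) / ((p.1 : ℝ) * (p.2 : ℝ))
            * ((PowerSeries.coeff m ((growthSeriesPow L p.1) ^ p.2) : ℕ) : ℝ) := by
  have hne : ((n : ℝ) + 1) ≠ 0 := by positivity
  apply mul_right_cancel₀ hne
  have hN' : neckCount L (n + 1) m * (n + 1)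
      = ∑ p ∈ (n + 1).divisorsAntidiagonal,
          Nat.totient p.1 * (PowerSeries.coeff m ((growthSeriesPow L p.1) ^ p.2)) := by
    rw [neck_formula n m]
    refine Finset.sum_congr rfl fun p hp => ?_
    obtain ⟨hmul, -⟩ := Nat.mem_divisorsAntidiagonal.mp hp
    have hp1 : 0 < p.1 := Nat.pos_of_ne_zero fun h0 => by
      rw [h0, zero_mul] at hmul
      exact Nat.succ_ne_zero n hmul.symm
    rw [coeff_eq hp1 p.2 m]
  have hcast := congrArg (fun t : ℕ => (t : ℝ)) hN'
  push_cast at hcast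
  rw [hcast, Finset.sum_mul]
  refine Finset.sum_congr rfl fun p hp => ?_
  obtain ⟨hmul, -⟩ := Nat.mem_divisorsAntidiagonal.mp hp
  have h1 : (p.1 : ℝ) * (p.2 : ℝ) = (n : ℝ) + 1 := by
    have := congrArg (fun t : ℕ => (t : ℝ)) hmul
    push_cast at this
    exact this
  have hne2 : (p.1 : ℝ) * (p.2 : ℝ) ≠ 0 := by rw [h1]; exact hne
  refine Eq.symm ?_
  calc (Nat.totient p.1 : ℝ) / ((p.1 : ℝ) * (p.2 : ℝ))
        * ((PowerSeries.coeff m ((growthSeriesPow L p.1) ^ p.2) : ℕ) : ℝ) * ((n : ℝ) + 1)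
      = (Nat.totient p.1 : ℝ) / ((p.1 : ℝ) * (p.2 : ℝ)) * ((p.1 : ℝ) * (p.2 : ℝ))
        * ((PowerSeries.coeff m ((growthSeriesPow L p.1) ^ p.2) : ℕ) : ℝ) := by
        rw [h1]; ring
    _ = (Nat.totient p.1 : ℝ)
        * ((PowerSeries.coeff m ((growthSeriesPow L p.1) ^ p.2) : ℕ) : ℝ) := by
        rw [div_mul_cancel₀ _ hne2]

lemma reindex (m : ℕ) (F : ℕ × ℕ → ℝ)
    (hF : ∀ k l : ℕ, m < (k + 1) * (l + 1) → F (k + 1, l + 1) = 0) :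
    ∑ n ∈ Finset.range m, ∑ p ∈ (n + 1).divisorsAntidiagonal, F p
      = ∑ k ∈ Finset.range m, ∑ l ∈ Finset.range m, F (k + 1, l + 1) := by
  classical
  have hsub : ∑ q ∈ Finset.range m ×ˢ Finset.range m, F (q.1 + 1, q.2 + 1)
      = ∑ q ∈ (Finset.range m ×ˢ Finset.range m) with (q.1 + 1) * (q.2 + 1) ≤ m,
          F (q.1 + 1, q.2 + 1) := by
    refine (Finset.sum_subset (Finset.filter_subset _ _) fun x hx hnx => ?_).symm
    have : ¬ (x.1 + 1) * (x.2 + 1) ≤ m := fun hle =>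
      hnx (Finset.mem_filter.mpr ⟨hx, hle⟩)
    exact hF x.1 x.2 (by omega)
  calc ∑ n ∈ Finset.range m, ∑ p ∈ (n + 1).divisorsAntidiagonal, F p
      = ∑ a ∈ (Finset.range m).sigma (fun n => (n + 1).divisorsAntidiagonal), F a.2 :=
        (Finset.sum_sigma (Finset.range m) (fun n => (n + 1).divisorsAntidiagonal)
          (fun a => F a.2)).symm
    _ = ∑ q ∈ (Finset.range m ×ˢ Finset.range m) with (q.1 + 1) * (q.2 + 1) ≤ m,
          F (q.1 + 1, q.2 + 1) := ?_
    _ = ∑ q ∈ Finset.range m ×ˢ Finset.range m, F (q.1 + 1, q.2 + 1) := hsub.symm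
    _ = ∑ k ∈ Finset.range m, ∑ l ∈ Finset.range m, F (k + 1, l + 1) :=
        Finset.sum_product (s := Finset.range m) (t := Finset.range m)
          (f := fun q => F (q.1 + 1, q.2 + 1))
  refine Finset.sum_nbij' (i := fun a => (a.2.1 - 1, a.2.2 - 1))
    (j := fun b => ⟨(b.1 + 1) * (b.2 + 1) - 1, (b.1 + 1, b.2 + 1)⟩) ?_ ?_ ?_ ?_ ?_
  · rintro ⟨n, p⟩ ha
    obtain ⟨hn, hp⟩ := Finset.mem_sigma.mp ha
    have hn : n ∈ Finset.range m := hn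
    have hp : p ∈ (n + 1).divisorsAntidiagonal := hp
    obtain ⟨hmul, -⟩ := Nat.mem_divisorsAntidiagonal.mp hp
    have hn' : n < m := Finset.mem_range.mp hn
    have h1 : 0 < p.1 := Nat.pos_of_ne_zero fun h0 => by
      rw [h0, zero_mul] at hmul; exact Nat.succ_ne_zero n hmul.symm
    have h2 : 0 < p.2 := Nat.pos_of_ne_zero fun h0 => by
      rw [h0, mul_zero] at hmul; exact Nat.succ_ne_zero n hmul.symm
    have hle1 : p.1 ≤ n + 1 := hmul ▸ Nat.le_mul_of_pos_right _ h2
    have hle2 : p.2 ≤ n + 1 := hmul ▸ Nat.le_mul_of_pos_left _ h1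
    have e1 : p.1 - 1 + 1 = p.1 := Nat.succ_pred_eq_of_pos h1
    have e2 : p.2 - 1 + 1 = p.2 := Nat.succ_pred_eq_of_pos h2
    refine Finset.mem_filter.mpr ⟨Finset.mem_product.mpr
      ⟨Finset.mem_range.mpr ?_, Finset.mem_range.mpr ?_⟩, ?_⟩
    · show p.1 - 1 < m
      omega
    · show p.2 - 1 < m
      omega
    · show (p.1 - 1 + 1) * (p.2 - 1 + 1) ≤ m
      rw [e1, e2, hmul]
      omega
  · rintro ⟨b1, b2⟩ hb
    obtain ⟨hmem, hle⟩ := Finset.mem_filter.mp hb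
    have hle' : (b1 + 1) * (b2 + 1) ≤ m := hle
    have hpos : 0 < (b1 + 1) * (b2 + 1) := Nat.mul_pos (Nat.succ_pos _) (Nat.succ_pos _)
    refine Finset.mem_sigma.mpr ⟨Finset.mem_range.mpr ?_, ?_⟩
    · show (b1 + 1) * (b2 + 1) - 1 < m
      omega
    · refine Nat.mem_divisorsAntidiagonal.mpr ⟨?_, ?_⟩
      · show (b1 + 1) * (b2 + 1) = (b1 + 1) * (b2 + 1) - 1 + 1
        omega
      · show (b1 + 1) * (b2 + 1) - 1 + 1 ≠ 0
        omega
  · rintro ⟨n, p⟩ ha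
    obtain ⟨hn, hp⟩ := Finset.mem_sigma.mp ha
    have hn : n ∈ Finset.range m := hn
    have hp : p ∈ (n + 1).divisorsAntidiagonal := hp
    obtain ⟨hmul, -⟩ := Nat.mem_divisorsAntidiagonal.mp hp
    have h1 : 0 < p.1 := Nat.pos_of_ne_zero fun h0 => by
      rw [h0, zero_mul] at hmul; exact Nat.succ_ne_zero n hmul.symm
    have h2 : 0 < p.2 := Nat.pos_of_ne_zero fun h0 => by
      rw [h0, mul_zero] at hmul; exact Nat.succ_ne_zero n hmul.symm
    have e1 : p.1 - 1 + 1 = p.1 := Nat.succ_pred_eq_of_pos h1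
    have e2 : p.2 - 1 + 1 = p.2 := Nat.succ_pred_eq_of_pos h2
    show (⟨(p.1 - 1 + 1) * (p.2 - 1 + 1) - 1, (p.1 - 1 + 1, p.2 - 1 + 1)⟩ :
      (_ : ℕ) × ℕ × ℕ) = ⟨n, p⟩
    rw [e1, e2, hmul]
    simp
  · rintro ⟨b1, b2⟩ _
    show ((b1 + 1 - 1, b2 + 1 - 1) : ℕ × ℕ) = (b1, b2)
    simp
  · rintro ⟨n, p⟩ ha
    obtain ⟨hn, hp⟩ := Finset.mem_sigma.mp ha
    have hn : n ∈ Finset.range m := hn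
    have hp : p ∈ (n + 1).divisorsAntidiagonal := hp
    obtain ⟨hmul, -⟩ := Nat.mem_divisorsAntidiagonal.mp hp
    have h1 : 0 < p.1 := Nat.pos_of_ne_zero fun h0 => by
      rw [h0, zero_mul] at hmul; exact Nat.succ_ne_zero n hmul.symm
    have h2 : 0 < p.2 := Nat.pos_of_ne_zero fun h0 => by
      rw [h0, mul_zero] at hmul; exact Nat.succ_ne_zero n hmul.symm
    have e1 : p.1 - 1 + 1 = p.1 := Nat.succ_pred_eq_of_pos h1
    have e2 : p.2 - 1 + 1 = p.2 := Nat.succ_pred_eq_of_pos h2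
    show F p = F (p.1 - 1 + 1, p.2 - 1 + 1)
    rw [e1, e2]

end Assemble

end NeckAux

open NeckAux

/-- The strict growth series of the set of necklaces over `L` (the disjoint union over
`n ≥ 1` of the quotients of `L^{×n}` by the cyclic permutation action of `C_n`, with
length of an orbit the common total length of its tuples) equals
`∑_{k≥1} ∑_{l≥1} (φ(k)/(kl)) (F_L(z^k))^l`, coefficientwise: for each `m`,
the number of necklaces of length `m` is the corresponding coefficient sum. -/
theorem growthSeries_necklaces {X : Type*} [Fintype X] (L : Set (List X))
    (hL : [] ∉ L) (m : ℕ) :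
    (∑' n : ℕ, (neckCount L (n + 1) m : ℝ))
      = ∑' k : ℕ, ∑' l : ℕ,
          (Nat.totient (k + 1) : ℝ) / ((k + 1) * (l + 1)) *
            ((PowerSeries.coeff m ((growthSeriesPow L (k + 1)) ^ (l + 1)) : ℕ) : ℝ) := by
  classical
  set F : ℕ × ℕ → ℝ := fun q => (Nat.totient q.1 : ℝ) / ((q.1 : ℝ) * (q.2 : ℝ))
    * ((PowerSeries.coeff m ((growthSeriesPow L q.1) ^ q.2) : ℕ) : ℝ) with hF
  have hcoeff0 : ∀ k l : ℕ, 0 < k → m < l * k →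
      (PowerSeries.coeff m ((growthSeriesPow L k) ^ l) : ℕ) = 0 := by
    intro k l hk h
    rw [card_pow hk l m]
    haveI := isEmpty_WTup (L := L) hL h
    exact Nat.card_of_isEmpty
  have hF0 : ∀ k l : ℕ, m < (k + 1) * (l + 1) → F (k + 1, l + 1) = 0 := by
    intro k l h
    rw [hF]
    have hc := hcoeff0 (k + 1) (l + 1) (Nat.succ_pos k)
      (by rw [Nat.mul_comm]; exact h)
    simp only [hc]
    simp
  have hterm : ∀ k l : ℕ,
      (Nat.totient (k + 1) : ℝ) / ((k + 1) * (l + 1)) *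
          ((PowerSeries.coeff m ((growthSeriesPow L (k + 1)) ^ (l + 1)) : ℕ) : ℝ)
        = F (k + 1, l + 1) := by
    intro k l
    rw [hF]
    push_cast
    ring
  have hL1 : (∑' n : ℕ, (neckCount L (n + 1) m : ℝ))
      = ∑ n ∈ Finset.range m, (neckCount L (n + 1) m : ℝ) := by
    refine tsum_eq_sum fun n hn => ?_
    have : m ≤ n := by simpa using Finset.mem_range.not.mp hn
    rw [neck_zero hL (by omega)]
    exact Nat.cast_zero
  have step1 : ∀ k : ℕ, (∑' l : ℕ, F (k + 1, l + 1)) = ∑ l ∈ Finset.range m, F (k + 1, l + 1) := by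
    intro k
    refine tsum_eq_sum fun l hl => ?_
    have hlm : m ≤ l := by simpa using Finset.mem_range.not.mp hl
    have : l + 1 ≤ (k + 1) * (l + 1) := Nat.le_mul_of_pos_left _ (Nat.succ_pos k)
    exact hF0 k l (by omega)
  have step2 : (∑' k : ℕ, ∑ l ∈ Finset.range m, F (k + 1, l + 1))
      = ∑ k ∈ Finset.range m, ∑ l ∈ Finset.range m, F (k + 1, l + 1) := by
    refine tsum_eq_sum fun k hk => ?_
    have hkm : m ≤ k := by simpa using Finset.mem_range.not.mp hk
    refine Finset.sum_eq_zero fun l _ => ?_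
    have : k + 1 ≤ (k + 1) * (l + 1) := Nat.le_mul_of_pos_right _ (Nat.succ_pos l)
    exact hF0 k l (by omega)
  calc (∑' n : ℕ, (neckCount L (n + 1) m : ℝ))
      = ∑ n ∈ Finset.range m, (neckCount L (n + 1) m : ℝ) := hL1
    _ = ∑ n ∈ Finset.range m, ∑ p ∈ (n + 1).divisorsAntidiagonal, F p :=
        Finset.sum_congr rfl fun n _ => neck_real n m
    _ = ∑ k ∈ Finset.range m, ∑ l ∈ Finset.range m, F (k + 1, l + 1) := reindex m F hF0
    _ = ∑' k : ℕ, ∑ l ∈ Finset.range m, F (k + 1, l + 1) := step2.symm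
    _ = ∑' k : ℕ, ∑' l : ℕ, F (k + 1, l + 1) := tsum_congr fun k => (step1 k).symm
    _ = ∑' k : ℕ, ∑' l : ℕ,
          (Nat.totient (k + 1) : ℝ) / ((k + 1) * (l + 1)) *
            ((PowerSeries.coeff m ((growthSeriesPow L (k + 1)) ^ (l + 1)) : ℕ) : ℝ) :=
        tsum_congr fun k => tsum_congr fun l => (hterm k l).symm
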